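/- arXiv:1405.1887 — 3 statements merged into one kernel-verified Lean document; each statement's English description precedes it below -/
import Mathlib

section
/- Let f : S ⥤ T be an exact functor of triangulated categories admitting an exact right adjoint g : T ⥤ S such that the counit f ∘ g ⟶ id_T is an isomorphism. Then the induced functor from the Verdier quotient S/ker(f) to T is an equivalence of categories. -/
open CategoryTheory CategoryTheory.Limits CategoryTheory.Pretriangulated

universe v u u'

/-- Let `f : S ⥤ T` be an exact functor of triangulated categories admitting an
exact right adjoint `g : T ⥤ S` such that the counit `f ∘ g ⟶ id_T` is an isomorphism. Then the
induced functor from the Verdier quotient `S/ker f` to `T` is an equivalence; equivalently, `f`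
is a localization functor with respect to the class `W` of morphisms whose cone lies in the
kernel `K = ker f` (the full triangulated subcategory of objects killed by `f`). -/
theorem verdier_quotient_by_kernel_equivalence
    {S : Type u} {T : Type u'} [Category.{v} S] [Category.{v} T]
    [HasZeroObject S] [HasZeroObject T] [Preadditive S] [Preadditive T]
    [HasShift S ℤ] [HasShift T ℤ]
    [∀ n : ℤ, (CategoryTheory.shiftFunctor S n).Additive]
    [∀ n : ℤ, (CategoryTheory.shiftFunctor T n).Additive]
    [Pretriangulated S] [Pretriangulated T]
    (f : S ⥤ T) (g : T ⥤ S)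
    [f.CommShift ℤ] [f.IsTriangulated] [g.CommShift ℤ] [g.IsTriangulated]
    (adj : f ⊣ g) (hcounit : IsIso adj.counit)
    (K : ObjectProperty S) [K.IsTriangulated]
    (hK : ∀ x : S, K x ↔ IsZero (f.obj x)) :
    f.IsLocalization K.trW := by
  have : IsIso adj.counit := hcounit
  have hg : g.FullyFaithful := adj.fullyFaithfulROfIsIsoCounit
  have : g.Full := hg.full
  have : g.Faithful := hg.faithful
  have hW : K.trW = (MorphismProperty.isomorphisms T).inverseImage f := by
    ext X Y s
    constructor
    · rintro ⟨Z, h1, h2, hT, hZ⟩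
      have hT' := f.map_distinguished _ hT
      have hZ' : IsZero ((f.mapTriangle.obj (Triangle.mk s h1 h2)).obj₃) := (hK Z).1 hZ
      exact (Triangle.isZero₃_iff_isIso₁ _ hT').1 hZ'
    · intro hs
      obtain ⟨Z, h1, h2, hT⟩ := distinguished_cocone_triangle s
      refine ⟨Z, h1, h2, hT, (hK Z).2 ?_⟩
      have hT' := f.map_distinguished _ hT
      exact Triangle.isZero₃_of_isIso₁ _ hT' hs
  rw [hW]
  exact adj.isLocalization
end

section
/- Let (R, 𝔪, κ) be a commutative local ring and P a perfect complex over R. Then P ≅ 0 in D(R) if and only if P ⊗^L_R κ ≅ 0 in D(κ). -/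
open CategoryTheory CategoryTheory.Limits CategoryTheory.MonoidalCategory

universe u

open IsLocalRing Function TensorProduct

theorem nakayama_surj {R : Type u} [CommRing R] [IsLocalRing R]
    {M N : Type u} [AddCommGroup M] [Module R M] [AddCommGroup N] [Module R N]
    [Module.Finite R N] (f : M →ₗ[R] N)
    (h : Surjective (f.rTensor (ResidueField R))) : Surjective f := by
  rw [← LinearMap.range_eq_top, ← IsLocalRing.map_mkQ_eq_top]
  set I := maximalIdeal R
  set e : N ⊗[R] ResidueField R ≃ₗ[R] N ⧸ I • (⊤ : Submodule R N) :=
    TensorProduct.tensorQuotEquivQuotSMul N I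
  have he : ∀ (n : N) (r : R), e (n ⊗ₜ (residue R r)) = Submodule.Quotient.mk (r • n) :=
    fun n r => tensorQuotEquivQuotSMul_tmul_mk (I := I) n r
  have key : ∀ t : M ⊗[R] ResidueField R,
      e (f.rTensor (ResidueField R) t) ∈
        (LinearMap.range f).map (Submodule.mkQ (I • ⊤)) := by
    intro t
    induction t with
    | zero => simp
    | tmul m c =>
      obtain ⟨r, rfl⟩ := IsLocalRing.residue_surjective c
      rw [LinearMap.rTensor_tmul, he]
      exact ⟨f (r • m), ⟨r • m, by simp⟩, by simp⟩
    | add x y hx hy =>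
      rw [map_add, map_add]
      exact Submodule.add_mem _ hx hy
  rw [eq_top_iff]
  rintro x -
  obtain ⟨n, rfl⟩ := Submodule.mkQ_surjective _ x
  obtain ⟨t, ht⟩ := h (n ⊗ₜ 1)
  have h1 : e (n ⊗ₜ (1 : ResidueField R)) = Submodule.Quotient.mk n := by
    have : (1 : ResidueField R) = residue R 1 := (map_one _).symm
    rw [this, he, one_smul]
  rw [Submodule.mkQ_apply, ← h1, ← ht]
  exact key t

section Aux
set_option linter.unusedSectionVars false
variable {R : Type u} [CommRing R] [IsLocalRing R]
  (P : CochainComplex (ModuleCat.{u} R) ℤ)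

local notation "k" => ResidueField R

abbrev KK (n : ℤ) : Submodule R (P.X n) := LinearMap.ker (P.d n (n+1)).hom

def Good (n : ℤ) : Prop :=
  Module.Projective R (KK P n) ∧ Module.Finite R (KK P n) ∧
    ∀ x ∈ KK P n, ∀ m : ℤ, m + 1 = n → ∃ y : P.X m, P.d m n y = x

lemma d_d (i j l : ℤ) (x : P.X i) : P.d j l (P.d i j x) = 0 := by
  have h : (P.d i j ≫ P.d j l) x = (0 : P.X i ⟶ P.X l) x := by rw [P.d_comp_d]
  rw [ConcreteCategory.comp_apply] at h
  rw [h]; rfl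

def dres (n : ℤ) : P.X n →ₗ[R] KK P (n+1) :=
  (P.d n (n+1)).hom.codRestrict (KK P (n+1)) (fun x => d_d P _ _ _ x)

@[simp] lemma dres_apply (n : ℤ) (x : P.X n) : (dres P n x : P.X (n+1)) = P.d n (n+1) x := rfl

/-- corestriction of the previous differential to the kernel -/
def fres (n : ℤ) : P.X (n-1) →ₗ[R] KK P n :=
  (P.d (n-1) n).hom.codRestrict (KK P n) (fun x => d_d P _ _ _ x)

@[simp] lemma fres_apply (n : ℤ) (x : P.X (n-1)) : (fres P n x : P.X n) = P.d (n-1) n x := rfl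

lemma fres_surjective (n : ℤ) (h : Good P n) : Surjective (fres P n) := by
  rintro ⟨z, hz⟩
  obtain ⟨y, hy⟩ := h.2.2 z hz (n-1) (by omega)
  exact ⟨y, Subtype.ext hy⟩

lemma exists_split (n : ℤ) (h : Good P (n+1)) :
    ∃ (s : KK P (n+1) →ₗ[R] P.X n) (π : P.X n →ₗ[R] KK P n),
      (∀ z : KK P (n+1), P.d n (n+1) (s z) = z) ∧
      (∀ x : KK P n, π x = x) ∧
      ((KK P n).subtype ∘ₗ π + s ∘ₗ dres P n = LinearMap.id) := by
  obtain ⟨hproj, -, hsurj⟩ := h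
  have hc : Surjective (dres P n) := by
    rintro ⟨z, hz⟩
    obtain ⟨y, hy⟩ := hsurj z hz n rfl
    exact ⟨y, Subtype.ext hy⟩
  obtain ⟨s, hs⟩ := Module.projective_lifting_property (dres P n) LinearMap.id hc
  have hs' : ∀ z : KK P (n+1), P.d n (n+1) (s z) = z := by
    intro z
    have h2 := DFunLike.congr_fun hs z
    simpa [Subtype.ext_iff] using h2
  set τ : P.X n →ₗ[R] P.X n := LinearMap.id - s ∘ₗ dres P n with hτ
  have hmem : ∀ x : P.X n, τ x ∈ KK P n := by
    intro x
    simp [τ, LinearMap.mem_ker, map_sub, hs' (dres P n x)]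
  refine ⟨s, τ.codRestrict (KK P n) hmem, hs', ?_, ?_⟩
  · intro x
    apply Subtype.ext
    have hc0 : dres P n (x : P.X n) = 0 := Subtype.ext (by simpa using x.2)
    simp [τ, LinearMap.codRestrict_apply, hc0]
  · apply LinearMap.ext
    intro x
    simp [τ, LinearMap.codRestrict_apply]

lemma good_step (n : ℤ) [Module.Free R (P.X n)] [Module.Finite R (P.X n)]
    (h : Good P (n+1))
    (hsurj : ∀ x ∈ KK P n, ∀ m : ℤ, m + 1 = n → ∃ y : P.X m, P.d m n y = x) :
    Good P n := by
  obtain ⟨s, π, hs, hπ, hid⟩ := exists_split P n h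
  exact ⟨Module.Projective.of_split (KK P n).subtype π (LinearMap.ext fun x => hπ x),
    Module.Finite.of_surjective π (fun z => ⟨z, hπ z⟩), hsurj⟩

lemma step_A (n : ℤ) [Module.Free R (P.X n)] [Module.Finite R (P.X n)]
    (h : Good P (n+1))
    (hEQ : ∀ x : (P.X n : Type u) ⊗[R] k, (P.d n (n+1)).hom.rTensor k x = 0 →
      ∃ y : (P.X (n-1) : Type u) ⊗[R] k, (P.d (n-1) n).hom.rTensor k y = x) :
    Good P n := by
  obtain ⟨s, π, hs, hπ, hid⟩ := exists_split P n h
  have hfin : Module.Finite R (KK P n) := Module.Finite.of_surjective π (fun z => ⟨z, hπ z⟩)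
  apply good_step P n h
  intro x hx m hm
  obtain rfl : m = n - 1 := by omega
  have hπι : π ∘ₗ (KK P n).subtype = LinearMap.id := LinearMap.ext fun z => hπ z
  have key : ∀ w' : (KK P n : Type u) ⊗[R] k, π.rTensor k (((KK P n).subtype).rTensor k w') = w' := by
    intro w'
    rw [← LinearMap.comp_apply, ← LinearMap.rTensor_comp, hπι, LinearMap.rTensor_id,
      LinearMap.id_apply]
  have hf : Surjective (fres P n) := by
    apply nakayama_surj
    intro w
    have h1 : (P.d n (n+1)).hom.rTensor k (((KK P n).subtype).rTensor k w) = 0 := by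
      have hz : (P.d n (n+1)).hom ∘ₗ (KK P n).subtype = 0 := LinearMap.ext fun z => z.2
      rw [← LinearMap.comp_apply, ← LinearMap.rTensor_comp, hz, LinearMap.rTensor_zero,
        LinearMap.zero_apply]
    obtain ⟨y, hy⟩ := hEQ _ h1
    refine ⟨y, ?_⟩
    have hdf : (P.d (n-1) n).hom = (KK P n).subtype ∘ₗ fres P n := rfl
    calc (fres P n).rTensor k y
        = π.rTensor k (((KK P n).subtype).rTensor k ((fres P n).rTensor k y)) := (key _).symm
      _ = π.rTensor k ((P.d (n-1) n).hom.rTensor k y) := by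
          rw [← LinearMap.comp_apply (((KK P n).subtype).rTensor k), ← LinearMap.rTensor_comp,
            ← hdf]
      _ = π.rTensor k (((KK P n).subtype).rTensor k w) := by rw [hy]
      _ = w := key w
  obtain ⟨y, hy⟩ := hf ⟨x, hx⟩
  exact ⟨y, congrArg Subtype.val hy⟩

lemma step_C (n : ℤ) (h1 : Good P n) (h2 : Good P (n+1)) (h3 : Good P (n+1+1))
    (x : (P.X n : Type u) ⊗[R] k) (hx : (P.d n (n+1)).hom.rTensor k x = 0) :
    ∃ y : (P.X (n-1) : Type u) ⊗[R] k, (P.d (n-1) n).hom.rTensor k y = x := by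
  obtain ⟨s, π, hs, hπ, hid⟩ := exists_split P n h2
  obtain ⟨s', π', hs', hπ', hid'⟩ := exists_split P (n+1) h3
  have hdres : dres P n = π' ∘ₗ (P.d n (n+1)).hom := by
    apply LinearMap.ext
    intro z
    have h0 : P.d n (n+1) z = (KK P (n+1)).subtype (dres P n z) := rfl
    rw [LinearMap.comp_apply, h0]
    exact (hπ' (dres P n z)).symm
  obtain ⟨y, hy⟩ := LinearMap.rTensor_surjective k (fres_surjective P n h1) (π.rTensor k x)
  refine ⟨y, ?_⟩
  have hxid := DFunLike.congr_fun (congrArg (LinearMap.rTensor k) hid) x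
  rw [LinearMap.rTensor_add, LinearMap.rTensor_id, LinearMap.add_apply, LinearMap.id_apply,
    LinearMap.rTensor_comp, LinearMap.rTensor_comp, LinearMap.comp_apply, LinearMap.comp_apply,
    hdres, LinearMap.rTensor_comp, LinearMap.comp_apply, hx, map_zero, map_zero, add_zero]
    at hxid
  have hdf : (P.d (n-1) n).hom = (KK P n).subtype ∘ₗ fres P n := rfl
  rw [hdf, LinearMap.rTensor_comp, LinearMap.comp_apply, hy, hxid]

lemma good_of_isZero (n : ℤ) (h : IsZero (P.X n)) : Good P n := by
  have hsub : Subsingleton (P.X n) := by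
    refine ⟨fun a b => ?_⟩
    have h0 : (𝟙 (P.X n) : P.X n ⟶ P.X n) = 0 := h.eq_of_src _ _
    have ha : a = (𝟙 (P.X n) : P.X n ⟶ P.X n) a := rfl
    have hb : b = (𝟙 (P.X n) : P.X n ⟶ P.X n) b := rfl
    rw [ha, hb, h0]
    rfl
  have : Subsingleton (KK P n) := ⟨fun a b => Subtype.ext (Subsingleton.elim _ _)⟩
  refine ⟨inferInstance, Module.Finite.of_surjective (0 : R →ₗ[R] KK P n)
    (fun z => ⟨0, Subsingleton.elim _ _⟩), ?_⟩
  intro x hx m hm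
  exact ⟨0, by rw [map_zero]; exact Subsingleton.elim _ _⟩

lemma good_all (b : ℤ) (hb : ∀ i : ℤ, b < i → IsZero (P.X i))
    [∀ i : ℤ, Module.Free R (P.X i)] [∀ i : ℤ, Module.Finite R (P.X i)]
    (hstep : ∀ n : ℤ, Good P (n+1) → Good P n) : ∀ n : ℤ, Good P n := by
  have main : ∀ (j : ℕ) (n : ℤ), b - j < n → Good P n := by
    intro j
    induction j with
    | zero => exact fun n hn => good_of_isZero P n (hb n (by omega))
    | succ j ih =>
      intro n hn
      by_cases hc : b - j < n
      · exact ih n hc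
      · obtain rfl : n = b - j := by omega
        exact hstep _ (ih _ (by omega))
  intro n
  exact main (b - n).natAbs.succ n (by omega)


lemma exactQ_iff (n : ℤ)
    (Q : CochainComplex (ModuleCat.{u} R) ℤ)
    (hQ : Q = ((tensorRight (ModuleCat.of R (ResidueField R))).mapHomologicalComplex
      (ComplexShape.up ℤ)).obj P) :
    Q.ExactAt n ↔
      ∀ x : (P.X n : Type u) ⊗[R] k, (P.d n (n+1)).hom.rTensor k x = 0 →
        ∃ y : (P.X (n-1) : Type u) ⊗[R] k, (P.d (n-1) n).hom.rTensor k y = x := by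
  subst hQ
  rw [HomologicalComplex.exactAt_iff' _ (n-1) n (n+1) (by simp) (by simp)]
  exact ShortComplex.moduleCat_exact_iff _

lemma exactP_iff (n : ℤ) :
    P.ExactAt n ↔
      ∀ x : P.X n, P.d n (n+1) x = 0 → ∃ y : P.X (n-1), P.d (n-1) n y = x := by
  rw [P.exactAt_iff' (n-1) n (n+1) (by simp) (by simp)]
  exact ShortComplex.moduleCat_exact_iff _

end Aux

/-- Let `(R, 𝔪, κ)` be a commutative local ring and `P` a perfect complex over
`R`, realized as a bounded complex of finite free `R`-modules (such complexes are K-flat, so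
termwise tensor with `κ` computes the derived fiber `P ⊗^L_R κ`). Then `P ≅ 0` in `D(R)`
(i.e. `P` is acyclic) if and only if `P ⊗^L_R κ ≅ 0` in `D(κ)` (i.e. the termwise tensor
`P ⊗_R κ` is acyclic). -/
theorem perfect_complex_zero_iff_derived_fiber_zero
    (R : Type u) [CommRing R] [IsLocalRing R]
    (P : CochainComplex (ModuleCat.{u} R) ℤ)
    (hbdd : ∃ a b : ℤ, ∀ i : ℤ, (i < a ∨ b < i) → IsZero (P.X i))
    (hfree : ∀ i : ℤ, Module.Free R (P.X i))
    (hfin : ∀ i : ℤ, Module.Finite R (P.X i)) :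
    (∀ n : ℤ, IsZero (P.homology n)) ↔
      (∀ n : ℤ, IsZero
        ((((tensorRight (ModuleCat.of R (IsLocalRing.ResidueField R))).mapHomologicalComplex
          (ComplexShape.up ℤ)).obj P).homology n)) := by
  haveI := hfree
  haveI := hfin
  obtain ⟨a, b, hab⟩ := hbdd
  set Q := ((tensorRight (ModuleCat.of R (IsLocalRing.ResidueField R))).mapHomologicalComplex
    (ComplexShape.up ℤ)).obj P with hQ
  have hzero : ∀ i : ℤ, b < i → IsZero (P.X i) := fun i hi => hab i (Or.inr hi)
  constructor
  · intro h n
    have hPex : ∀ m : ℤ, P.ExactAt m := fun m =>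
      (HomologicalComplex.exactAt_iff_isZero_homology _ _).2 (h m)
    have hgood : ∀ m : ℤ, Good P m := by
      apply good_all P b hzero
      intro m hg
      apply good_step P m hg
      intro x hx j hj
      obtain rfl : j = m - 1 := by omega
      exact ((exactP_iff P m).1 (hPex m)) x hx
    rw [← HomologicalComplex.exactAt_iff_isZero_homology,
      exactQ_iff P n Q hQ]
    intro x hx
    exact step_C P n (hgood n) (hgood (n+1)) (hgood (n+1+1)) x hx
  · intro h n
    have hQex : ∀ m : ℤ, ∀ x : (P.X m : Type u) ⊗[R] (IsLocalRing.ResidueField R),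
        (P.d m (m+1)).hom.rTensor _ x = 0 →
        ∃ y : (P.X (m-1) : Type u) ⊗[R] (IsLocalRing.ResidueField R),
          (P.d (m-1) m).hom.rTensor _ y = x := fun m =>
      (exactQ_iff P m Q hQ).1
        ((HomologicalComplex.exactAt_iff_isZero_homology _ _).2 (h m))
    have hgood : ∀ m : ℤ, Good P m := by
      apply good_all P b hzero
      intro m hg
      exact step_A P m hg (hQex m)
    rw [← HomologicalComplex.exactAt_iff_isZero_homology, exactP_iff P n]
    intro x hx
    obtain ⟨y, hy⟩ := (hgood n).2.2 x hx (n-1) (by omega)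
    exact ⟨y, hy⟩
end

section
/- Let R be a dense full triangulated subcategory of an essentially small triangulated category S (i.e., the thick closure of R is all of S). Then for every object s of S, the object s ⊕ Σs belongs to R (up to isomorphism). -/
open CategoryTheory CategoryTheory.Limits CategoryTheory.Pretriangulated

open ZeroObject

universe v u

namespace CategoryTheory.Triangulated

/-- The Mathlib (Dec 2024) structure `Triangulated.Subcategory`, removed since; restored verbatim
in meaning. -/
structure Subcategory (C : Type*) [Category C] [HasZeroObject C] [HasShift C ℤ]
    [Preadditive C] [∀ n : ℤ, (shiftFunctor C n).Additive] [Pretriangulated C] where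
  P : C → Prop
  zero' : ∃ (Z : C) (_ : IsZero Z), P Z
  shift (X : C) (n : ℤ) : P X → P (X⟦n⟧)
  ext₂' (T : Triangle C) (_ : T ∈ distTriang C) : P T.obj₁ → P T.obj₃ →
    ∃ (Y : C) (_ : P Y), Nonempty (T.obj₂ ≅ Y)

namespace Subcategory

variable {C : Type*} [Category C] [HasZeroObject C] [HasShift C ℤ]
    [Preadditive C] [∀ n : ℤ, (shiftFunctor C n).Additive] [Pretriangulated C]

class IsoClosed (S : Subcategory C) : Prop where
  closed : ∀ X Y : C, (X ≅ Y) → S.P X → S.P Y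

def isoClosure (S : Subcategory C) : Subcategory C where
  P := fun X => ∃ (Y : C) (_ : S.P Y), Nonempty (X ≅ Y)
  zero' := by
    obtain ⟨Z, hZ, hZ₀⟩ := S.zero'
    exact ⟨Z, hZ, Z, hZ₀, ⟨Iso.refl _⟩⟩
  shift X n := by
    rintro ⟨Y, hY, ⟨e⟩⟩
    exact ⟨Y⟦n⟧, S.shift Y n hY, ⟨(shiftFunctor C n).mapIso e⟩⟩
  ext₂' := by
    rintro T hT ⟨X₁, h₁, ⟨e₁⟩⟩ ⟨X₃, h₃, ⟨e₃⟩⟩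
    obtain ⟨Y, hY, ⟨e⟩⟩ := S.ext₂' (Triangle.mk (e₁.inv ≫ T.mor₁) (T.mor₂ ≫ e₃.hom)
      (e₃.inv ≫ T.mor₃ ≫ e₁.hom⟦1⟧')) (isomorphic_distinguished _ hT _
        (Triangle.isoMk _ _ e₁.symm (Iso.refl _) e₃.symm (by exact Category.comp_id _)
          (by
            show (T.mor₂ ≫ e₃.hom) ≫ e₃.inv = 𝟙 T.obj₂ ≫ T.mor₂
            simp only [Category.assoc, Iso.hom_inv_id, Category.comp_id, Category.id_comp]) (by
          change (e₃.inv ≫ T.mor₃ ≫ (shiftFunctor C 1).map e₁.hom) ≫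
            (shiftFunctor C 1).map e₁.inv = e₃.inv ≫ T.mor₃
          simp only [Category.assoc, ← Functor.map_comp, Iso.hom_inv_id, Functor.map_id,
            Category.comp_id]))) h₁ h₃
    exact ⟨Y, ⟨Y, hY, ⟨Iso.refl _⟩⟩, ⟨e⟩⟩

instance (S : Subcategory C) : S.isoClosure.IsoClosed where
  closed := by
    rintro X Y e ⟨Z, hZ, ⟨f⟩⟩
    exact ⟨Z, hZ, ⟨e.symm ≪≫ f⟩⟩

lemma ext₂ (S : Subcategory C) [S.IsoClosed] (T : Triangle C) (hT : T ∈ distTriang C)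
    (h₁ : S.P T.obj₁) (h₃ : S.P T.obj₃) : S.P T.obj₂ := by
  obtain ⟨Y, hY, ⟨e⟩⟩ := S.ext₂' T hT h₁ h₃
  exact IsoClosed.closed _ _ e.symm hY

def mk' (P : C → Prop) (zero : P 0) (shift : ∀ (X : C) (n : ℤ), P X → P (X⟦n⟧))
    (ext₂ : ∀ (T : Triangle C) (_ : T ∈ distTriang C), P T.obj₁ → P T.obj₃ → P T.obj₂) :
    Subcategory C where
  P := P
  zero' := ⟨0, isZero_zero _, zero⟩
  shift := shift
  ext₂' T hT h₁ h₃ := ⟨T.obj₂, ext₂ T hT h₁ h₃, ⟨Iso.refl _⟩⟩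

end Subcategory

end CategoryTheory.Triangulated

section Aux

variable {C : Type*} [Category C] [Preadditive C]

/-- The product of a `Bool`-indexed family is a binary biproduct. -/
noncomputable def prodBoolIsoBiprod (f : Bool → C) [HasProduct f]
    [HasBinaryBiproduct (f true) (f false)] :
    (∏ᶜ f) ≅ f true ⊞ f false where
  hom := biprod.lift (Pi.π f true) (Pi.π f false)
  inv := Pi.lift (fun b => Bool.rec biprod.snd biprod.fst b)
  hom_inv_id := by
    apply Pi.hom_ext
    rintro (_ | _) <;> simp
  inv_hom_id := by
    apply biprod.hom_ext <;> simp

end Aux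

/-- Let `R` be a dense full triangulated subcategory of an essentially small
triangulated category `S`: the thick closure of `R` (the smallest full triangulated subcategory
of `S` closed under isomorphisms and direct summands containing `R`) is all of `S`. Then for
every object `s` of `S`, the object `s ⊕ Σ s` belongs to `R` up to isomorphism. -/
theorem dense_subcategory_contains_s_oplus_shift_s
    {S : Type u} [Category.{v} S]
    [HasZeroObject S] [Preadditive S] [HasShift S ℤ]
    [∀ n : ℤ, (CategoryTheory.shiftFunctor S n).Additive]
    [Pretriangulated S] [EssentiallySmall.{v} S] [HasBinaryBiproducts S]
    (R : Triangulated.Subcategory S)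
    (hdense : ∀ T : Triangulated.Subcategory S,
      (∀ x y : S, (x ≅ y) → T.P x → T.P y) →
      (∀ x y : S, T.P (x ⊞ y) → T.P x) →
      (∀ x, R.P x → T.P x) → ∀ x, T.P x)
    (s : S) :
    ∃ r : S, R.P r ∧ Nonempty ((s ⊞ s⟦(1 : ℤ)⟧) ≅ r) := by
  classical
  set R' := R.isoClosure with hR'
  have hR'mem : ∀ {x r : S}, R.P r → (x ≅ r) → R'.P x := by
    rintro x r hr e
    exact ⟨r, hr, ⟨e⟩⟩
  -- the thick closure of R
  set Q : S → Prop := fun x => ∃ (y r : S), R.P r ∧ Nonempty ((x ⊞ y) ≅ r) with hQ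
  have Qzero : Q 0 := by
    obtain ⟨Z, hZ, hZ'⟩ := R.zero'
    exact ⟨Z, Z, hZ', ⟨(isoZeroBiprod (isZero_zero S)).symm⟩⟩
  have Qshift : ∀ (x : S) (n : ℤ), Q x → Q (x⟦n⟧) := by
    rintro x n ⟨y, r, hr, ⟨e⟩⟩
    letI := preservesBinaryBiproducts_of_preservesBiproducts (shiftFunctor S n)
    exact ⟨y⟦n⟧, r⟦n⟧, R.shift r n hr,
      ⟨((shiftFunctor S n).mapBiprod x y).symm ≪≫ (shiftFunctor S n).mapIso e⟩⟩
  have Qext₂ : ∀ (D : Triangle S), (D ∈ distTriang S) → Q D.obj₁ → Q D.obj₃ → Q D.obj₂ := by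
    rintro D hD ⟨y₁, r₁, hr₁, ⟨e₁⟩⟩ ⟨y₃, r₃, hr₃, ⟨e₃⟩⟩
    set Tb₁ : Bool → Triangle S := fun b => bif b then D else contractibleTriangle y₁ with hTb₁
    have hE₁ : productTriangle Tb₁ ∈ distTriang S := by
      refine productTriangle_distinguished _ ?_
      rintro (_ | _)
      · exact contractible_distinguished y₁
      · exact hD
    set Tb₂ : Bool → Triangle S := fun b =>
      bif b then productTriangle Tb₁ else Triangle.mk (0 : (0 : S) ⟶ y₃) (𝟙 y₃) 0 with hTb₂
    have hE₂ : productTriangle Tb₂ ∈ distTriang S := by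
      refine productTriangle_distinguished _ ?_
      rintro (_ | _)
      · exact contractible_distinguished₁ y₃
      · exact hE₁
    have h₁ : R'.P (productTriangle Tb₂).obj₁ := by
      refine hR'mem hr₁ ?_
      refine (prodBoolIsoBiprod (fun b => (Tb₂ b).obj₁)) ≪≫ ?_
      exact (isoBiprodZero (isZero_zero S)).symm ≪≫
        (prodBoolIsoBiprod (fun b => (Tb₁ b).obj₁)) ≪≫ e₁
    have h₃ : R'.P (productTriangle Tb₂).obj₃ := by
      refine hR'mem hr₃ ?_
      refine (prodBoolIsoBiprod (fun b => (Tb₂ b).obj₃)) ≪≫ ?_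
      refine biprod.mapIso ((prodBoolIsoBiprod (fun b => (Tb₁ b).obj₃)) ≪≫
        (isoBiprodZero (isZero_zero S)).symm) (Iso.refl y₃) ≪≫ e₃
    have h₂ := R'.ext₂ (productTriangle Tb₂) hE₂ h₁ h₃
    obtain ⟨r', hr', ⟨e'⟩⟩ := h₂
    refine ⟨y₁ ⊞ y₃, r', hr', ⟨?_⟩⟩
    refine ?_ ≪≫ e'
    refine (biprod.associator D.obj₂ y₁ y₃).symm ≪≫ ?_
    refine biprod.mapIso ((prodBoolIsoBiprod (fun b => (Tb₁ b).obj₂)).symm) (Iso.refl y₃) ≪≫ ?_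
    exact (prodBoolIsoBiprod (fun b => (Tb₂ b).obj₂)).symm
  set T : Triangulated.Subcategory S := Triangulated.Subcategory.mk' Q Qzero Qshift Qext₂ with hT
  have hTiso : ∀ x y : S, (x ≅ y) → T.P x → T.P y := by
    rintro x y e ⟨z, r, hr, ⟨f⟩⟩
    exact ⟨z, r, hr, ⟨biprod.mapIso e.symm (Iso.refl z) ≪≫ f⟩⟩
  have hTsum : ∀ x y : S, T.P (x ⊞ y) → T.P x := by
    rintro x y ⟨z, r, hr, ⟨f⟩⟩
    exact ⟨y ⊞ z, r, hr, ⟨(biprod.associator x y z).symm ≪≫ f⟩⟩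
  have hTR : ∀ x, R.P x → T.P x := by
    intro x hx
    exact ⟨0, x, hx, ⟨(isoBiprodZero (isZero_zero S)).symm⟩⟩
  obtain ⟨y, r, hr, ⟨e⟩⟩ := hdense T hTiso hTsum hTR s
  -- the triangle s ⟶ s ⟶ s ⊞ s⟦1⟧
  set Ts : Triangle S := Triangle.mk (0 : s ⟶ s)
    (biprod.inl : s ⟶ s ⊞ s⟦(1 : ℤ)⟧) (biprod.snd) with hTs'
  have hTs : Ts ∈ distTriang S := by
    rw [rotate_distinguished_triangle]
    refine isomorphic_distinguished _
      (binaryBiproductTriangle_distinguished s (s⟦(1 : ℤ)⟧)) _ ?_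
    exact Triangle.isoMk _ _ (Iso.refl _) (Iso.refl _) (Iso.refl _)
      (by show (biprod.inl : s ⟶ s ⊞ s⟦(1 : ℤ)⟧) ≫ 𝟙 _ = 𝟙 _ ≫ biprod.inl; simp)
      (by show (biprod.snd : s ⊞ s⟦(1 : ℤ)⟧ ⟶ s⟦(1 : ℤ)⟧) ≫ 𝟙 _ = 𝟙 _ ≫ biprod.snd; simp)
      (by
        show (-(shiftFunctor S (1 : ℤ)).map (0 : s ⟶ s)) ≫ (shiftFunctor S (1 : ℤ)).map (𝟙 s) =
          𝟙 ((shiftFunctor S (1 : ℤ)).obj s) ≫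
            (0 : (shiftFunctor S (1 : ℤ)).obj s ⟶ (shiftFunctor S (1 : ℤ)).obj s)
        simp)
  set Tb : Bool → Triangle S := fun b => bif b then Ts else contractibleTriangle y with hTb
  have hE : productTriangle Tb ∈ distTriang S := by
    refine productTriangle_distinguished _ ?_
    rintro (_ | _)
    · exact contractible_distinguished y
    · exact hTs
  have hrot := rot_of_distTriang _ hE
  have h₁ : R'.P (productTriangle Tb).rotate.obj₁ := by
    refine hR'mem hr ?_
    exact (prodBoolIsoBiprod (fun b => (Tb b).obj₂)) ≪≫ e
  have h₃ : R'.P (productTriangle Tb).rotate.obj₃ := by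
    refine hR'mem (R.shift r 1 hr) ?_
    exact (shiftFunctor S (1 : ℤ)).mapIso
      ((prodBoolIsoBiprod (fun b => (Tb b).obj₁)) ≪≫ e)
  have h₂ := R'.ext₂ _ hrot h₁ h₃
  have : R'.P (s ⊞ s⟦(1 : ℤ)⟧) := by
    refine Triangulated.Subcategory.IsoClosed.closed _ _ ?_ h₂
    exact (prodBoolIsoBiprod (fun b => (Tb b).obj₃)) ≪≫ (isoBiprodZero (isZero_zero S)).symm
  obtain ⟨r', hr', ⟨e'⟩⟩ := this
  exact ⟨r', hr', ⟨e'⟩⟩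
end
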